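/- The L-by-L matrix U with Uᵢᵢ = 1 for all i, U₁₂ = U₂₁ = γ, and Uᵢⱼ = −τ for all other i ≠ j, is positive semidefinite whenever 0 ≤ τ ≤ 1/(L−1) and −1/(L−1) ≤ γ ≤ 1. -/

import Mathlib

lemma stmt18_aux (m τ γ a b t P : ℝ) (hm : 1 ≤ m) (hτ0 : 0 ≤ τ)
    (hτn : τ * (m+1) ≤ 1) (hγn : -1 ≤ γ * (m+1)) (hγ1 : γ ≤ 1)
    (hCS : t^2 ≤ m * P) :
    0 ≤ (1+τ)*(a^2+b^2+P) + (γ+τ)*(b*a) + (γ+τ)*(a*b) - τ*(a+b+t)^2 := by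
  have hd : 2 ≤ (1 + τ - m*τ) * (m+1) := by nlinarith
  have hdpos : 0 < 1 + τ - m*τ := by nlinarith
  have h2 : m ≤ (1+γ) * (m+1) := by nlinarith
  have hprod : 2 * m ≤ ((1 + τ - m*τ) * (m+1)) * ((1+γ) * (m+1)) := by
    have := mul_le_mul hd h2 (by linarith) (by linarith)
    linarith
  have h3 : (τ*(m+1))^2 ≤ 1 := by nlinarith
  have hkey : 2*m*τ^2 ≤ (1+τ-m*τ)*(1+γ) := by nlinarith [sq_nonneg (m+1)]
  have hq : 0 ≤ (1+τ-m*τ)*t^2 - 2*m*τ*(a+b)*t + m*(1+γ)*(a+b)^2/2 := by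
    nlinarith [sq_nonneg ((1+τ-m*τ)*t - m*τ*(a+b)),
      mul_nonneg (sub_nonneg.2 hkey) (sq_nonneg (a+b)), hdpos]
  have hP : 0 ≤ m * ((1+τ)*(a^2+b^2+P) + (γ+τ)*(b*a) + (γ+τ)*(a*b) - τ*(a+b+t)^2) := by
    nlinarith [hq, mul_nonneg (by linarith : (0:ℝ) ≤ 1+τ) (by linarith : (0:ℝ) ≤ m*P - t^2),
      mul_nonneg (mul_nonneg (by linarith : (0:ℝ) ≤ m) (by linarith : (0:ℝ) ≤ 1-γ)) (sq_nonneg (a-b))]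
  nlinarith [hP]

/-- the `L×L` matrix with unit diagonal, entry `γ` in positions
`(1,2)` and `(2,1)`, and `-τ` elsewhere off the diagonal, is positive
semidefinite whenever `0 ≤ τ ≤ 1/(L-1)` and `-1/(L-1) ≤ γ ≤ 1`. -/
theorem stmt_18 (L : ℕ) (hL : 3 ≤ L) (τ γ : ℝ)
    (hτ0 : 0 ≤ τ) (hτ1 : τ ≤ 1 / ((L : ℝ) - 1))
    (hγ0 : -1 / ((L : ℝ) - 1) ≤ γ) (hγ1 : γ ≤ 1) :
    (Matrix.of fun i j : Fin L =>
      if i = j then (1 : ℝ) else if i.val ≤ 1 ∧ j.val ≤ 1 then γ else -τ).PosSemidef := by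
  have h0 : 0 < L := by omega
  have h1 : 1 < L := by omega
  set i0 : Fin L := ⟨0, h0⟩ with hi0
  set i1 : Fin L := ⟨1, h1⟩ with hi1
  have hne01 : i0 ≠ i1 := by simp [hi0, hi1, Fin.ext_iff]
  have hL3 : (3:ℝ) ≤ (L:ℝ) := by exact_mod_cast hL
  have hn0 : (0:ℝ) < (L:ℝ) - 1 := by linarith
  have hτn : τ * ((L:ℝ)-1) ≤ 1 := by
    have := (le_div_iff₀ hn0).mp hτ1; linarith
  have hγn : -1 ≤ γ * ((L:ℝ)-1) := by
    have := (div_le_iff₀ hn0).mp hγ0; nlinarith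
  rw [Matrix.posSemidef_iff_dotProduct_mulVec]
  constructor
  · ext i j
    simp only [Matrix.conjTranspose_apply, Matrix.of_apply, star_trivial]
    rcases eq_or_ne i j with rfl | h
    · simp
    · simp [h, h.symm, and_comm]
  · intro x
    have hentry : ∀ i j : Fin L,
        (if i = j then (1:ℝ) else if i.val ≤ 1 ∧ j.val ≤ 1 then γ else -τ)
        = (if i = j then 1+τ else 0)
          + (if j = i1 then (if i = i0 then γ+τ else 0) else 0)
          + (if j = i0 then (if i = i1 then γ+τ else 0) else 0) + (-τ) := by
      intro i j
      split_ifs <;>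
        first
          | ring1
          | (exfalso; subst_vars; simp_all [hi0, hi1, Fin.ext_iff]; all_goals omega)
    have row : ∀ i : Fin L,
        (∑ j, (if i = j then (1:ℝ) else if i.val ≤ 1 ∧ j.val ≤ 1 then γ else -τ) * x j)
        = (1+τ) * x i + (if i = i0 then γ+τ else 0) * x i1
          + (if i = i1 then γ+τ else 0) * x i0 + (-τ) * ∑ j, x j := by
      intro i
      have step : ∀ j : Fin L,
          (if i = j then (1:ℝ) else if i.val ≤ 1 ∧ j.val ≤ 1 then γ else -τ) * x j
          = (if i = j then (1+τ) * x j else 0)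
            + (if j = i1 then (if i = i0 then γ+τ else 0) * x j else 0)
            + (if j = i0 then (if i = i1 then γ+τ else 0) * x j else 0) + (-τ) * x j := by
        intro j
        rw [hentry i j]
        split_ifs <;> ring
      rw [Finset.sum_congr rfl fun j _ => step j]
      rw [Finset.sum_add_distrib, Finset.sum_add_distrib, Finset.sum_add_distrib,
        Finset.sum_ite_eq, Finset.sum_ite_eq', Finset.sum_ite_eq', ← Finset.mul_sum]
      simp
    have Qform : (∑ i, x i * ∑ j,
        (if i = j then (1:ℝ) else if i.val ≤ 1 ∧ j.val ≤ 1 then γ else -τ) * x j)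
        = (1+τ) * (∑ i, x i ^ 2) + (γ+τ) * (x i1 * x i0) + (γ+τ) * (x i0 * x i1)
          - τ * ((∑ i, x i) * (∑ i, x i)) := by
      have step : ∀ i : Fin L, x i * (∑ j,
          (if i = j then (1:ℝ) else if i.val ≤ 1 ∧ j.val ≤ 1 then γ else -τ) * x j)
          = (1+τ) * x i ^ 2 + (if i = i0 then (γ+τ) * (x i1 * x i) else 0)
            + (if i = i1 then (γ+τ) * (x i0 * x i) else 0) + (-τ) * (∑ j, x j) * x i := by
        intro i
        rw [row i]
        split_ifs <;> ring
      rw [Finset.sum_congr rfl fun i _ => step i]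
      rw [Finset.sum_add_distrib, Finset.sum_add_distrib, Finset.sum_add_distrib,
        Finset.sum_ite_eq', Finset.sum_ite_eq', ← Finset.mul_sum, ← Finset.mul_sum]
      simp only [Finset.mem_univ, if_true]
      ring
    have hsplit : ∀ f : Fin L → ℝ,
        ∑ i, f i = f i0 + f i1 + ∑ i ∈ Finset.univ \ ({i0, i1} : Finset (Fin L)), f i := by
      intro f
      rw [← Finset.sum_sdiff (Finset.subset_univ ({i0, i1} : Finset (Fin L))),
        Finset.sum_pair hne01]
      ring
    have hcard : ((Finset.univ \ ({i0, i1} : Finset (Fin L))).card : ℝ) = (L:ℝ) - 2 := by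
      rw [Finset.card_sdiff_of_subset (Finset.subset_univ _), Finset.card_univ, Fintype.card_fin,
        Finset.card_pair hne01]
      have : 2 ≤ L := by omega
      push_cast [Nat.cast_sub this]
      ring
    have hCS : (∑ i ∈ Finset.univ \ ({i0, i1} : Finset (Fin L)), x i) ^ 2
        ≤ ((L:ℝ) - 2) * ∑ i ∈ Finset.univ \ ({i0, i1} : Finset (Fin L)), x i ^ 2 := by
      have := sq_sum_le_card_mul_sum_sq (s := Finset.univ \ ({i0, i1} : Finset (Fin L)))
        (f := x)
      rwa [hcard] at this
    simp only [Matrix.star_apply, Matrix.mulVec, dotProduct, Matrix.of_apply,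
      Pi.star_apply, star_trivial]
    rw [Qform, hsplit (fun i => x i ^ 2), hsplit x]
    have main := stmt18_aux ((L:ℝ) - 2) τ γ (x i0) (x i1)
      (∑ i ∈ Finset.univ \ ({i0, i1} : Finset (Fin L)), x i)
      (∑ i ∈ Finset.univ \ ({i0, i1} : Finset (Fin L)), x i ^ 2)
      (by linarith) hτ0 (by rw [show (L:ℝ) - 2 + 1 = (L:ℝ) - 1 by ring]; exact hτn)
      (by rw [show (L:ℝ) - 2 + 1 = (L:ℝ) - 1 by ring]; exact hγn) hγ1 hCS
    nlinarith [main]
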